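/- Let B be a Boolean algebra and A, C conjunctions of equations between Boolean terms over two sets of constants sharing some common constants, with a occurring only in A and b occurring only in C. If A ∧ C entails a ≤ b in all Boolean algebras, then there exists a Boolean term t built only from constants common to A and C such that A ∧ C entails a ≤ t and t ≤ b in all Boolean algebras. -/

import Mathlib

/-- Boolean terms over a set `C` of constants, built with `∧, ∨, ¬, 0, 1`. -/
inductive BTerm (C : Type) : Type
  | const : C → BTerm C
  | and : BTerm C → BTerm C → BTerm C
  | or : BTerm C → BTerm C → BTerm C
  | not : BTerm C → BTerm C
  | top : BTerm C
  | bot : BTerm C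

/-- Evaluation of a Boolean term in a Boolean algebra under an interpretation of constants. -/
def BTerm.eval {C α : Type} [BooleanAlgebra α] (v : C → α) : BTerm C → α
  | .const c => v c
  | .and s t => s.eval v ⊓ t.eval v
  | .or s t => s.eval v ⊔ t.eval v
  | .not s => (s.eval v)ᶜ
  | .top => ⊤
  | .bot => ⊥

/-- The constants occurring in a Boolean term. -/
def BTerm.consts {C : Type} : BTerm C → Set C
  | .const c => {c}
  | .and s t => s.consts ∪ t.consts
  | .or s t => s.consts ∪ t.consts
  | .not s => s.consts
  | .top => ∅
  | .bot => ∅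

/-- The constants occurring in a conjunction of equations between Boolean terms. -/
def beqConsts {C : Type} (A : List (BTerm C × BTerm C)) : Set C :=
  { c | ∃ p ∈ A, c ∈ p.1.consts ∪ p.2.consts }

/-- `A ⊨_Bool s ≤ t`: in every Boolean algebra, every interpretation of the constants
satisfying all the equations of `A` satisfies `s ≤ t` (where `x ≤ y` abbreviates
`x ⊓ y ≈ x`). -/
def boolEntailsLe {C : Type} (A : List (BTerm C × BTerm C)) (s t : BTerm C) : Prop :=
  ∀ (α : Type) [BooleanAlgebra α] (v : C → α),
    (∀ p ∈ A, p.1.eval v = p.2.eval v) → s.eval v ≤ t.eval v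

namespace BoolInterp

open scoped Classical

variable {Cst : Type}

/-! ### Basic helpers on `Bool` -/

lemma bool_inf_true {x y : Bool} (h : x ⊓ y = true) : x = true ∧ y = true := by
  revert h; cases x <;> cases y <;> decide

lemma bool_le_true {x y : Bool} (h : x ≤ y) (hx : x = true) : y = true := by
  subst hx; revert h; cases y <;> decide

/-! ### Evaluation depends only on occurring constants -/

lemma eval_congr {α : Type} [BooleanAlgebra α] {v w : Cst → α} (t : BTerm Cst)
    (h : ∀ c ∈ t.consts, v c = w c) : t.eval v = t.eval w := by
  induction t with
  | const c => exact h c rfl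
  | and s t ihs iht =>
    simp only [BTerm.eval]
    rw [ihs fun c hc => h c (Set.mem_union_left _ hc),
        iht fun c hc => h c (Set.mem_union_right _ hc)]
  | or s t ihs iht =>
    simp only [BTerm.eval]
    rw [ihs fun c hc => h c (Set.mem_union_left _ hc),
        iht fun c hc => h c (Set.mem_union_right _ hc)]
  | not s ihs =>
    simp only [BTerm.eval]
    rw [ihs fun c hc => h c hc]
  | top => rfl
  | bot => rfl

/-! ### Lists of occurring constants -/

def constL : BTerm Cst → List Cst
  | .const c => [c]
  | .and s t => constL s ++ constL t
  | .or s t => constL s ++ constL t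
  | .not s => constL s
  | .top => []
  | .bot => []

lemma mem_constL {c : Cst} : ∀ {t : BTerm Cst}, c ∈ constL t ↔ c ∈ t.consts := by
  intro t
  induction t <;> simp_all [constL, BTerm.consts]

def eqsL (A : List (BTerm Cst × BTerm Cst)) : List Cst :=
  A.foldr (fun p l => constL p.1 ++ constL p.2 ++ l) []

lemma mem_eqsL {c : Cst} {A : List (BTerm Cst × BTerm Cst)} :
    c ∈ eqsL A ↔ c ∈ beqConsts A := by
  induction A with
  | nil => simp [eqsL, beqConsts]
  | cons p A ih =>
    simp only [eqsL, List.foldr, List.mem_append] at *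
    constructor
    · rintro ((h | h) | h)
      · exact ⟨p, List.mem_cons_self, Or.inl (mem_constL.1 h)⟩
      · exact ⟨p, List.mem_cons_self, Or.inr (mem_constL.1 h)⟩
      · obtain ⟨q, hq, hc⟩ := ih.1 h
        exact ⟨q, List.mem_cons_of_mem _ hq, hc⟩
    · rintro ⟨q, hq, hc⟩
      rcases List.mem_cons.1 hq with rfl | hq
      · rcases hc with h | h
        · exact Or.inl (Or.inl (mem_constL.2 h))
        · exact Or.inl (Or.inr (mem_constL.2 h))
      · exact Or.inr (ih.2 ⟨q, hq, hc⟩)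

/-! ### Atoms (semantic) -/

section Atoms

variable {α : Type} [BooleanAlgebra α]

def lit (x : α) (b : Bool) : α := if b then x else xᶜ

def atomE : List Cst → (Cst → Bool) → (Cst → α) → α
  | [], _, _ => ⊤
  | c :: L, ε, v => lit (v c) (ε c) ⊓ atomE L ε v

lemma atomE_congr {L : List Cst} {ε ε' : Cst → Bool} (v : Cst → α)
    (h : ∀ c ∈ L, ε c = ε' c) : atomE L ε v = atomE L ε' v := by
  induction L with
  | nil => rfl
  | cons c L ih =>
    simp only [atomE]
    rw [h c (List.mem_cons_self), ih fun d hd => h d (List.mem_cons_of_mem _ hd)]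

lemma atomE_le_lit {L : List Cst} {c : Cst} (hc : c ∈ L) (ε : Cst → Bool) (v : Cst → α) :
    atomE L ε v ≤ lit (v c) (ε c) := by
  induction L with
  | nil => cases hc
  | cons d L ih =>
    rcases List.mem_cons.1 hc with rfl | h
    · exact inf_le_left
    · exact le_trans inf_le_right (ih h)

lemma atomE_le_lit_eval (L : List Cst) (ε : Cst → Bool) (v : Cst → α) :
    ∀ t : BTerm Cst, t.consts ⊆ {c | c ∈ L} →
      atomE L ε v ≤ lit (t.eval v) (t.eval ε) := by
  intro t ht
  induction t with
  | const c => exact atomE_le_lit (ht rfl) ε v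
  | and s t ihs iht =>
    have hs := ihs fun c hc => ht (Set.mem_union_left _ hc)
    have hti := iht fun c hc => ht (Set.mem_union_right _ hc)
    show atomE L ε v ≤ lit (s.eval v ⊓ t.eval v) (s.eval ε ⊓ t.eval ε)
    cases hse : s.eval ε <;> cases hte : t.eval ε <;>
      rw [hse] at hs <;> rw [hte] at hti <;>
      simp only [lit, if_true, if_false, show ((false : Bool) ⊓ false) = false from rfl,
        show ((false : Bool) ⊓ true) = false from rfl,
        show ((true : Bool) ⊓ false) = false from rfl,
        show ((true : Bool) ⊓ true) = true from rfl, compl_inf] at hs hti ⊢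
    · exact le_trans hs le_sup_left
    · exact le_trans hs le_sup_left
    · exact le_trans hti le_sup_right
    · exact le_inf hs hti
  | or s t ihs iht =>
    have hs := ihs fun c hc => ht (Set.mem_union_left _ hc)
    have hti := iht fun c hc => ht (Set.mem_union_right _ hc)
    show atomE L ε v ≤ lit (s.eval v ⊔ t.eval v) (s.eval ε ⊔ t.eval ε)
    cases hse : s.eval ε <;> cases hte : t.eval ε <;>
      rw [hse] at hs <;> rw [hte] at hti <;>
      simp only [lit, if_true, if_false, show ((false : Bool) ⊔ false) = false from rfl,
        show ((false : Bool) ⊔ true) = true from rfl,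
        show ((true : Bool) ⊔ false) = true from rfl,
        show ((true : Bool) ⊔ true) = true from rfl, compl_sup] at hs hti ⊢
    · exact le_inf hs hti
    · exact le_trans hti le_sup_right
    · exact le_trans hs le_sup_left
    · exact le_trans hs le_sup_left
  | not s ihs =>
    have hs := ihs fun c hc => ht hc
    show atomE L ε v ≤ lit (s.eval v)ᶜ (s.eval ε)ᶜ
    cases hse : s.eval ε <;> rw [hse] at hs <;>
      simp only [lit, if_true, if_false, Bool.compl_eq_bnot, Bool.not_false, Bool.not_true,
        compl_compl] at hs ⊢
    · exact hs
    · exact hs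
  | top =>
    show atomE L ε v ≤ lit ⊤ ⊤
    simp [lit, show ((⊤ : Bool) = true) from rfl]
  | bot =>
    show atomE L ε v ≤ lit ⊥ ⊥
    simp [lit, show ((⊥ : Bool) = false) from rfl]

end Atoms

/-! ### All assignments over a list of variables -/

noncomputable def updF (ε : Cst → Bool) (c : Cst) (b : Bool) : Cst → Bool :=
  fun x => if x = c then b else ε x

noncomputable def allAsgn : List Cst → List (Cst → Bool)
  | [] => [fun _ => false]
  | c :: L => (allAsgn L).map (fun ε => updF ε c true) ++ (allAsgn L).map (fun ε => updF ε c false)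

lemma exists_mem_allAsgn (L : List Cst) (ε : Cst → Bool) :
    ∃ ε' ∈ allAsgn L, ∀ c ∈ L, ε' c = ε c := by
  induction L with
  | nil =>
    exact ⟨fun _ => false, List.mem_singleton_self _, fun c hc => absurd hc List.not_mem_nil⟩
  | cons d L ih =>
    obtain ⟨ε', hmem, hagree⟩ := ih
    refine ⟨updF ε' d (ε d), ?_, ?_⟩
    · cases hεd : ε d
      · exact List.mem_append_right _ (List.mem_map_of_mem hmem)
      · exact List.mem_append_left _ (List.mem_map_of_mem hmem)
    · intro c hc
      by_cases h : c = d
      · subst h; simp [updF]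
      · rcases List.mem_cons.1 hc with h' | h'
        · exact absurd h' h
        · simp [updF, h, hagree c h']

section Partition

variable {α : Type} [BooleanAlgebra α]

def supL (l : List α) : α := l.foldr (· ⊔ ·) ⊥

lemma supL_append (l₁ l₂ : List α) : supL (l₁ ++ l₂) = supL l₁ ⊔ supL l₂ := by
  induction l₁ with
  | nil => simp [supL]
  | cons x l ih =>
    show x ⊔ supL (l ++ l₂) = (x ⊔ supL l) ⊔ supL l₂
    rw [ih, sup_assoc]

lemma inf_supL (x : α) (l : List α) : x ⊓ supL l = supL (l.map (x ⊓ ·)) := by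
  induction l with
  | nil => simp [supL]
  | cons y l ih =>
    show x ⊓ (y ⊔ supL l) = (x ⊓ y) ⊔ supL (l.map (x ⊓ ·))
    rw [inf_sup_left, ih]

lemma supL_le {l : List α} {y : α} (h : ∀ x ∈ l, x ≤ y) : supL l ≤ y := by
  induction l with
  | nil => exact bot_le
  | cons x l ih =>
    exact sup_le (h x (List.mem_cons_self)) (ih fun z hz => h z (List.mem_cons_of_mem _ hz))

lemma supL_atoms (L : List Cst) (hL : L.Nodup) (v : Cst → α) :
    supL ((allAsgn L).map (fun ε => atomE L ε v)) = ⊤ := by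
  induction L with
  | nil => simp [allAsgn, atomE, supL]
  | cons d L ih =>
    have hdL : d ∉ L := (List.nodup_cons.1 hL).1
    have hnd : L.Nodup := (List.nodup_cons.1 hL).2
    have key : ∀ b : Bool, ((allAsgn L).map (fun ε => updF ε d b)).map
        (fun ε => atomE (d :: L) ε v) = (allAsgn L).map (fun ε => lit (v d) b ⊓ atomE L ε v) := by
      intro b
      rw [List.map_map]
      apply List.map_congr_left
      intro ε _
      show atomE (d :: L) (updF ε d b) v = lit (v d) b ⊓ atomE L ε v
      simp only [atomE]
      rw [show updF ε d b d = b by simp [updF]]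
      rw [atomE_congr v (ε := updF ε d b) (ε' := ε) fun c hc => by
        have hcd : c ≠ d := fun h => hdL (h ▸ hc)
        simp [updF, hcd]]
    show supL ((((allAsgn L).map (fun ε => updF ε d true)) ++
        ((allAsgn L).map (fun ε => updF ε d false))).map (fun ε => atomE (d :: L) ε v)) = ⊤
    rw [List.map_append, supL_append, key true, key false]
    have h1 : ∀ b : Bool, (allAsgn L).map (fun ε => lit (v d) b ⊓ atomE L ε v) =
        ((allAsgn L).map (fun ε => atomE L ε v)).map (fun x => lit (v d) b ⊓ x) := by
      intro b; rw [List.map_map]; rfl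
    rw [h1 true, h1 false, ← inf_supL, ← inf_supL, ih hnd, inf_top_eq, inf_top_eq]
    simp [lit]

/-! ### The transfer lemma -/

lemma transfer (L : List Cst) (hL : L.Nodup) (s t : BTerm Cst)
    (hs : s.consts ⊆ {c | c ∈ L}) (ht : t.consts ⊆ {c | c ∈ L})
    (h : ∀ ε : Cst → Bool, s.eval ε = true → t.eval ε = true)
    (v : Cst → α) : s.eval v ≤ t.eval v := by
  have h1 : s.eval v = s.eval v ⊓ supL ((allAsgn L).map fun ε => atomE L ε v) := by
    rw [supL_atoms L hL v, inf_top_eq]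
  rw [h1, inf_supL, List.map_map]
  apply supL_le
  intro x hx
  obtain ⟨ε, hε, rfl⟩ := List.mem_map.1 hx
  show s.eval v ⊓ atomE L ε v ≤ t.eval v
  by_cases hse : s.eval ε = true
  · have h2 := atomE_le_lit_eval L ε v t ht
    rw [h ε hse] at h2
    simp only [lit, if_true] at h2
    exact le_trans inf_le_right h2
  · have h2 := atomE_le_lit_eval L ε v s hs
    rw [Bool.not_eq_true] at hse
    rw [hse] at h2
    simp only [lit, if_false] at h2
    calc s.eval v ⊓ atomE L ε v ≤ s.eval v ⊓ (s.eval v)ᶜ := inf_le_inf_left _ h2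
      _ = ⊥ := inf_compl_eq_bot
      _ ≤ t.eval v := bot_le

end Partition

/-! ### Syntactic combinators -/

def biimpT (s t : BTerm Cst) : BTerm Cst := .and (.or (.not s) t) (.or (.not t) s)

lemma consts_biimpT {s t : BTerm Cst} {c : Cst} (h : c ∈ (biimpT s t).consts) :
    c ∈ s.consts ∪ t.consts := by
  simp only [biimpT, BTerm.consts, Set.mem_union] at h ⊢
  tauto

lemma biimpT_eval_top {α : Type} [BooleanAlgebra α] {v : Cst → α} {s t : BTerm Cst}
    (h : s.eval v = t.eval v) : (biimpT s t).eval v = ⊤ := by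
  simp [biimpT, BTerm.eval, h]

lemma biimpT_eval_bool {ε : Cst → Bool} {s t : BTerm Cst}
    (h : (biimpT s t).eval ε = true) : s.eval ε = t.eval ε := by
  revert h
  show ((s.eval ε)ᶜ ⊔ t.eval ε) ⊓ ((t.eval ε)ᶜ ⊔ s.eval ε) = true → s.eval ε = t.eval ε
  cases s.eval ε <;> cases t.eval ε <;> decide

def bigAndT : List (BTerm Cst) → BTerm Cst
  | [] => .top
  | s :: l => .and s (bigAndT l)

lemma consts_bigAndT {l : List (BTerm Cst)} {c : Cst} (h : c ∈ (bigAndT l).consts) :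
    ∃ s ∈ l, c ∈ s.consts := by
  induction l with
  | nil => cases h
  | cons s l ih =>
    rcases h with h | h
    · exact ⟨s, List.mem_cons_self, h⟩
    · obtain ⟨u, hu, hc⟩ := ih h
      exact ⟨u, List.mem_cons_of_mem _ hu, hc⟩

lemma bigAndT_eval_top {α : Type} [BooleanAlgebra α] {v : Cst → α} {l : List (BTerm Cst)}
    (h : ∀ s ∈ l, s.eval v = ⊤) : (bigAndT l).eval v = ⊤ := by
  induction l with
  | nil => rfl
  | cons s l ih =>
    show s.eval v ⊓ (bigAndT l).eval v = ⊤
    rw [h s (List.mem_cons_self), ih fun u hu => h u (List.mem_cons_of_mem _ hu), inf_top_eq]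

lemma bigAndT_eval_bool {ε : Cst → Bool} {l : List (BTerm Cst)}
    (h : (bigAndT l).eval ε = true) : ∀ s ∈ l, s.eval ε = true := by
  induction l with
  | nil => intro s hs; cases hs
  | cons s l ih =>
    have h' := bool_inf_true h
    intro u hu
    rcases List.mem_cons.1 hu with rfl | hu
    · exact h'.1
    · exact ih h'.2 u hu

def bigOrT : List (BTerm Cst) → BTerm Cst
  | [] => .bot
  | s :: l => .or s (bigOrT l)

lemma consts_bigOrT {l : List (BTerm Cst)} {c : Cst} (h : c ∈ (bigOrT l).consts) :
    ∃ s ∈ l, c ∈ s.consts := by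
  induction l with
  | nil => cases h
  | cons s l ih =>
    rcases h with h | h
    · exact ⟨s, List.mem_cons_self, h⟩
    · obtain ⟨u, hu, hc⟩ := ih h
      exact ⟨u, List.mem_cons_of_mem _ hu, hc⟩

lemma bool_sup_true {x y : Bool} (h : x ⊔ y = true) : x = true ∨ y = true := by
  revert h; cases x <;> cases y <;> decide

lemma bool_sup_true' {x y : Bool} (h : x = true ∨ y = true) : x ⊔ y = true := by
  revert h; cases x <;> cases y <;> decide

lemma bigOrT_eval_true_of {ε : Cst → Bool} {l : List (BTerm Cst)} {s : BTerm Cst}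
    (hs : s ∈ l) (h : s.eval ε = true) : (bigOrT l).eval ε = true := by
  induction l with
  | nil => cases hs
  | cons u l ih =>
    show u.eval ε ⊔ (bigOrT l).eval ε = true
    rcases List.mem_cons.1 hs with rfl | hs
    · exact bool_sup_true' (Or.inl h)
    · exact bool_sup_true' (Or.inr (ih hs))

lemma exists_of_bigOrT_eval_true {ε : Cst → Bool} {l : List (BTerm Cst)}
    (h : (bigOrT l).eval ε = true) : ∃ s ∈ l, s.eval ε = true := by
  induction l with
  | nil => exact absurd h Bool.false_ne_true
  | cons u l ih =>
    rcases bool_sup_true h with h' | h'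
    · exact ⟨u, List.mem_cons_self, h'⟩
    · obtain ⟨s, hs, h''⟩ := ih h'
      exact ⟨s, List.mem_cons_of_mem _ hs, h''⟩

def litT (c : Cst) (b : Bool) : BTerm Cst := if b then .const c else .not (.const c)

def atomT : List Cst → (Cst → Bool) → BTerm Cst
  | [], _ => .top
  | c :: L, ε => .and (litT c (ε c)) (atomT L ε)

lemma consts_atomT {L : List Cst} {ε : Cst → Bool} {c : Cst} (h : c ∈ (atomT L ε).consts) :
    c ∈ L := by
  induction L with
  | nil => cases h
  | cons d L ih =>
    rcases h with h | h
    · have hcd : c = d := by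
        cases hεd : ε d <;> rw [hεd] at h <;>
          simpa [litT, BTerm.consts] using h
      rw [hcd]; exact List.mem_cons_self
    · exact List.mem_cons_of_mem _ (ih h)

lemma atomT_eval_eq {α : Type} [BooleanAlgebra α] (L : List Cst) (ε : Cst → Bool) (v : Cst → α) :
    (atomT L ε).eval v = atomE L ε v := by
  induction L with
  | nil => rfl
  | cons c L ih =>
    show (litT c (ε c)).eval v ⊓ (atomT L ε).eval v = lit (v c) (ε c) ⊓ atomE L ε v
    rw [ih]
    cases hεc : ε c <;> simp [litT, lit, BTerm.eval]

lemma atomE_true_iff (L : List Cst) (ε δ : Cst → Bool) :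
    atomE L ε δ = true ↔ ∀ c ∈ L, ε c = δ c := by
  induction L with
  | nil => simp [atomE]
  | cons c L ih =>
    show lit (δ c) (ε c) ⊓ atomE L ε δ = true ↔ _
    constructor
    · intro h
      have h' := bool_inf_true h
      intro d hd
      rcases List.mem_cons.1 hd with rfl | hd
      · have := h'.1
        revert this
        cases hεd : ε d <;> cases hδd : δ d <;> simp [lit, hεd, hδd]
      · exact ih.1 h'.2 d hd
    · intro h
      have h1 : lit (δ c) (ε c) = true := by
        have := h c (List.mem_cons_self)
        rw [lit, this]
        cases δ c <;> decide
      have h2 := ih.2 fun d hd => h d (List.mem_cons_of_mem _ hd)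
      rw [h1, h2]
      decide

/-! ### Main theorem helpers -/

lemma consts_hat {A : List (BTerm Cst × BTerm Cst)} {c : Cst}
    (h : c ∈ (bigAndT (A.map fun p => biimpT p.1 p.2)).consts) : c ∈ beqConsts A := by
  obtain ⟨s, hs, hcs⟩ := consts_bigAndT h
  obtain ⟨p, hp, rfl⟩ := List.mem_map.1 hs
  exact ⟨p, hp, consts_biimpT hcs⟩

end BoolInterp

open BoolInterp in
/-- The theory of Boolean algebras is `{≤}`-interpolating: if `A ∧ C` entails `a ≤ b`
in all Boolean algebras, where the constant `a` occurs only in `A` and `b` only in `C`,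
then there is a Boolean term `t` over constants common to `A` and `C` with
`A ∧ C ⊨ a ≤ t` and `A ∧ C ⊨ t ≤ b`. -/
theorem bool_le_interpolating {Cst : Type} (A C : List (BTerm Cst × BTerm Cst)) (a b : Cst)
    (haA : a ∈ beqConsts A) (haC : a ∉ beqConsts C)
    (hbC : b ∈ beqConsts C) (hbA : b ∉ beqConsts A)
    (hent : boolEntailsLe (A ++ C) (.const a) (.const b)) :
    ∃ t : BTerm Cst, t.consts ⊆ beqConsts A ∩ beqConsts C ∧
      boolEntailsLe (A ++ C) (.const a) t ∧
      boolEntailsLe (A ++ C) t (.const b) := by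
  classical
  set LA := eqsL A with hLA
  set LC := eqsL C with hLC
  set S : List Cst := (LA.filter fun c => decide (c ∈ LC)).dedup with hS
  have hmemS : ∀ c, c ∈ S ↔ c ∈ beqConsts A ∧ c ∈ beqConsts C := by
    intro c
    rw [hS, List.mem_dedup, List.mem_filter]
    simp [mem_eqsL, hLA, hLC]
  have hSnd : S.Nodup := List.nodup_dedup _
  set Ahat : BTerm Cst := bigAndT (A.map fun p => biimpT p.1 p.2) with hAhat
  set Chat : BTerm Cst := bigAndT (C.map fun p => biimpT p.1 p.2) with hChat
  set good : (Cst → Bool) → Prop := fun ε =>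
    ∃ w : Cst → Bool, (∀ c ∈ S, w c = ε c) ∧ (∀ p ∈ A, p.1.eval w = p.2.eval w) ∧
      w a = true with hgood
  set t : BTerm Cst :=
    bigOrT ((allAsgn S).map fun ε => if good ε then atomT S ε else .bot) with ht
  have htconsts : t.consts ⊆ beqConsts A ∩ beqConsts C := by
    intro c hc
    obtain ⟨s, hs, hcs⟩ := consts_bigOrT hc
    obtain ⟨ε, hε, rfl⟩ := List.mem_map.1 hs
    by_cases hg : good ε
    · rw [if_pos hg] at hcs
      exact (hmemS c).1 (consts_atomT hcs)
    · rw [if_neg hg] at hcs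
      cases hcs
  refine ⟨t, htconsts, ?_, ?_⟩
  · -- A ++ C ⊨ a ≤ t
    intro α _ v hv
    have hAtop : Ahat.eval v = ⊤ := by
      apply bigAndT_eval_top
      intro s hs
      obtain ⟨p, hp, rfl⟩ := List.mem_map.1 hs
      exact biimpT_eval_top (hv p (List.mem_append_left _ hp))
    have key : (BTerm.and Ahat (.const a)).eval v ≤ t.eval v := by
      apply transfer ((a :: (LA ++ S)).dedup) (List.nodup_dedup _)
      · intro c hc
        rcases hc with hc | hc
        · have := consts_hat (hAhat ▸ hc)
          simp only [Set.mem_setOf_eq, List.mem_dedup]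
          exact List.mem_cons_of_mem _ (List.mem_append_left _ (mem_eqsL.2 this))
        · simp only [Set.mem_setOf_eq, List.mem_dedup]
          rw [hc]
          exact List.mem_cons_self
      · intro c hc
        have := htconsts hc
        simp only [Set.mem_setOf_eq, List.mem_dedup]
        exact List.mem_cons_of_mem _ (List.mem_append_right _ ((hmemS c).2 this))
      · intro ε hε
        have hsplit : Ahat.eval ε = true ∧ ε a = true := bool_inf_true hε
        obtain ⟨ε', hε'mem, hagree⟩ := exists_mem_allAsgn S ε
        have hg : good ε' :=
          ⟨ε, fun c hc => (hagree c hc).symm,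
            fun p hp => biimpT_eval_bool
              (bigAndT_eval_bool hsplit.1 _ (List.mem_map_of_mem hp)), hsplit.2⟩
        apply bigOrT_eval_true_of (List.mem_map_of_mem hε'mem)
        rw [if_pos hg, atomT_eval_eq]
        exact (atomE_true_iff S ε' ε).2 fun c hc => hagree c hc
    calc v a = Ahat.eval v ⊓ v a := by rw [hAtop, top_inf_eq]
      _ ≤ t.eval v := key
  · -- A ++ C ⊨ t ≤ b
    intro α _ v hv
    have hCtop : Chat.eval v = ⊤ := by
      apply bigAndT_eval_top
      intro s hs
      obtain ⟨p, hp, rfl⟩ := List.mem_map.1 hs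
      exact biimpT_eval_top (hv p (List.mem_append_right _ hp))
    have key : (BTerm.and Chat t).eval v ≤ (BTerm.const b).eval v := by
      apply transfer ((b :: (LC ++ S)).dedup) (List.nodup_dedup _)
      · intro c hc
        rcases hc with hc | hc
        · have := consts_hat (hChat ▸ hc)
          simp only [Set.mem_setOf_eq, List.mem_dedup]
          exact List.mem_cons_of_mem _ (List.mem_append_left _ (mem_eqsL.2 this))
        · have := htconsts hc
          simp only [Set.mem_setOf_eq, List.mem_dedup]
          exact List.mem_cons_of_mem _ (List.mem_append_right _ ((hmemS c).2 this))
      · intro c hc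
        have : c = b := hc
        simp only [Set.mem_setOf_eq, List.mem_dedup]
        rw [this]
        exact List.mem_cons_self
      · intro ε hε
        have hsplit : Chat.eval ε = true ∧ t.eval ε = true := bool_inf_true hε
        obtain ⟨s, hs, hstrue⟩ := exists_of_bigOrT_eval_true hsplit.2
        obtain ⟨ε', hε'mem, rfl⟩ := List.mem_map.1 hs
        by_cases hg : good ε'
        swap
        · rw [if_neg hg] at hstrue
          exact absurd hstrue Bool.false_ne_true
        rw [if_pos hg, atomT_eval_eq] at hstrue
        have hagree := (atomE_true_iff S ε' ε).1 hstrue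
        obtain ⟨w, hwS, hwA, hwa⟩ := hg
        set u : Cst → Bool := fun c => if c ∈ LA then w c else ε c with hu
        have huA : ∀ p ∈ A, p.1.eval u = p.2.eval u := by
          intro p hp
          have e1 : p.1.eval u = p.1.eval w :=
            eval_congr p.1 fun c hc => by
              simp [hu, show c ∈ LA from mem_eqsL.2 ⟨p, hp, Or.inl hc⟩]
          have e2 : p.2.eval u = p.2.eval w :=
            eval_congr p.2 fun c hc => by
              simp [hu, show c ∈ LA from mem_eqsL.2 ⟨p, hp, Or.inr hc⟩]
          rw [e1, e2]
          exact hwA p hp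
        have huC : ∀ p ∈ C, p.1.eval u = p.2.eval u := by
          intro p hp
          have hval : ∀ c ∈ p.1.consts ∪ p.2.consts, u c = ε c := by
            intro c hc
            by_cases hcA : c ∈ LA
            · have hcC : c ∈ LC := mem_eqsL.2 ⟨p, hp, hc⟩
              have hcS : c ∈ S := (hmemS c).2 ⟨mem_eqsL.1 hcA, mem_eqsL.1 hcC⟩
              simp only [hu, if_pos hcA]
              rw [hwS c hcS, hagree c hcS]
            · simp [hu, hcA]
          have e1 : p.1.eval u = p.1.eval ε :=
            eval_congr p.1 fun c hc => hval c (Set.mem_union_left _ hc)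
          have e2 : p.2.eval u = p.2.eval ε :=
            eval_congr p.2 fun c hc => hval c (Set.mem_union_right _ hc)
          rw [e1, e2]
          exact biimpT_eval_bool
            (bigAndT_eval_bool hsplit.1 _ (List.mem_map_of_mem hp))
        have hub : u a ≤ u b := by
          apply hent Bool u
          intro p hp
          rcases List.mem_append.1 hp with hp' | hp'
          · exact huA p hp'
          · exact huC p hp'
        have hua : u a = true := by
          have haLA : a ∈ LA := mem_eqsL.2 haA
          simp [hu, haLA, hwa]
        have hub' : u b = true := bool_le_true hub hua
        have hbLA : b ∉ LA := fun h => hbA (mem_eqsL.1 h)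
        show ε b = true
        rw [← hub']
        simp [hu, hbLA]
    calc t.eval v = Chat.eval v ⊓ t.eval v := by rw [hCtop, top_inf_eq]
      _ ≤ v b := key
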